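/- Let G be a finite tree (a connected acyclic simple graph) on a nonempty vertex set V, and let u assign to each edge e of G a real number u_e with 0 ≤ u_e ≤ 1. Define the real square matrix W indexed by V by W_{ii} = 1 for every i, and, for i ≠ j, W_{ij} = the minimum of u_e over the edges e lying on the unique path in G from i to j. Then W is symmetric and positive semidefinite. -/

import Mathlib

open Finset Matrix


universe u

private lemma quad_expand {m : Type u} [Fintype m] (A : Matrix m m ℝ) (y : m → ℝ) :
    y ⬝ᵥ A *ᵥ y = ∑ i, ∑ j, y i * A i j * y j := by
  simp [dotProduct, Matrix.mulVec, Finset.mul_sum, mul_assoc]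

private lemma ultra_form (N : ℕ) : ∀ (n : Type u) [Fintype n],
    Fintype.card n ≤ N → ∀ W : Matrix n n ℝ,
    (∀ i j, W i j = W j i) → (∀ i, W i i = 1) →
    (∀ i j, 0 ≤ W i j) → (∀ i j, W i j ≤ 1) →
    (∀ i j k, min (W i k) (W k j) ≤ W i j) →
    ∀ x : n → ℝ, 0 ≤ x ⬝ᵥ W *ᵥ x := by
  induction N with
  | zero =>
    intro n _ hcard W _ _ _ _ _ x
    haveI : IsEmpty n := Fintype.card_eq_zero_iff.mp (Nat.le_zero.mp hcard)
    simp [dotProduct]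
  | succ N IH =>
    intro n _ hcard W hsym hdiag h0 h1 hultra x
    classical
    rw [quad_expand]
    by_cases hall : ∀ i j, W i j = 1
    · have : ∑ i, ∑ j, x i * W i j * x j = (∑ i, x i) * (∑ j, x j) := by
        rw [Finset.sum_mul_sum]
        exact Finset.sum_congr rfl fun i _ => Finset.sum_congr rfl fun j _ => by
          rw [hall i j]; ring
      rw [this]
      exact mul_self_nonneg _
    · push_neg at hall
      obtain ⟨i₀, j₀, hne1⟩ := hall
      haveI : Nonempty n := ⟨i₀⟩
      set F : Finset ℝ := Finset.univ.image (fun p : n × n => W p.1 p.2) with hF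
      have hFne : F.Nonempty := ⟨W i₀ j₀, Finset.mem_image.mpr ⟨(i₀, j₀), Finset.mem_univ _, rfl⟩⟩
      set c : ℝ := F.min' hFne with hc
      have hcle : ∀ i j, c ≤ W i j := fun i j =>
        Finset.min'_le _ _ (Finset.mem_image.mpr ⟨(i, j), Finset.mem_univ _, rfl⟩)
      obtain ⟨p₀, -, hp₀⟩ := Finset.mem_image.mp (F.min'_mem hFne)
      have hc0 : 0 ≤ c := by rw [hc, ← hp₀]; exact h0 _ _
      have hc1 : c < 1 := lt_of_le_of_ne (le_trans (hcle i₀ j₀) (h1 i₀ j₀))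
        (fun h => hne1 (le_antisymm (h1 i₀ j₀) (h ▸ hcle i₀ j₀)))
      have hd : (0:ℝ) < 1 - c := by linarith
      have hab : ¬ c < W p₀.1 p₀.2 := by rw [hc, ← hp₀] at *; exact lt_irrefl _
      have hrefl : ∀ i, c < W i i := fun i => (hdiag i) ▸ hc1
      have htrans : ∀ {i j k}, c < W i j → c < W j k → c < W i k := by
        intro i j k h₁ h₂
        exact lt_of_lt_of_le (lt_min h₁ h₂) (hultra i k j)
      let s : Setoid n := ⟨fun i j => c < W i j,
        ⟨hrefl, fun {i j} h => (hsym j i) ▸ h, fun {i j k} => htrans⟩⟩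
      set M : Matrix n n ℝ := Matrix.of (fun i j => if c < W i j then (W i j - c)/(1-c) else 0)
        with hM
      have hWM : ∀ i j, W i j = c + (1-c) * M i j := by
        intro i j
        by_cases h : c < W i j
        · simp only [hM, Matrix.of_apply, if_pos h]
          field_simp
          ring
        · have hh : W i j = c := le_antisymm (not_lt.mp h) (hcle i j)
          simp [hM, Matrix.of_apply, if_neg h, hh]
      have hMpos : 0 ≤ ∑ i, ∑ j, x i * M i j * x j := by
        have key : ∑ i, ∑ j, x i * M i j * x j
            = ∑ q : Quotient s, ∑ i : {a // Quotient.mk s a = q},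
                ∑ j : {a // Quotient.mk s a = q}, x i.1 * M i.1 j.1 * x j.1 := by
          rw [← Fintype.sum_fiberwise (Quotient.mk s) (fun i => ∑ j, x i * M i j * x j)]
          refine Finset.sum_congr rfl fun q _ => Finset.sum_congr rfl fun i _ => ?_
          rw [← Fintype.sum_fiberwise (Quotient.mk s) (fun j => x i.1 * M i.1 j * x j)]
          rw [Finset.sum_eq_single_of_mem q (Finset.mem_univ q)]
          intro q' _ hq'
          apply Finset.sum_eq_zero
          intro j _
          have hnr : ¬ c < W i.1 j.1 := by
            intro h
            apply hq'
            rw [← j.2, ← i.2]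
            exact (Quotient.sound (s := s) h).symm
          simp [hM, Matrix.of_apply, if_neg hnr]
        rw [key]
        apply Finset.sum_nonneg
        intro q _
        have hcards : Fintype.card {a // Quotient.mk s a = q} ≤ N := by
          have hlt : Fintype.card {a // Quotient.mk s a = q} < Fintype.card n := by
            by_cases hq : Quotient.mk s p₀.1 = q
            · refine Fintype.card_subtype_lt (x := p₀.2) ?_
              intro h2
              exact hab (Quotient.exact (s := s) (hq.trans h2.symm))
            · exact Fintype.card_subtype_lt (x := p₀.1) hq
          omega
        have hrel : ∀ i j : {a // Quotient.mk s a = q}, c < W i.1 j.1 := by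
          intro i j
          exact Quotient.exact (s := s) (i.2.trans j.2.symm)
        set Wq : Matrix {a // Quotient.mk s a = q} {a // Quotient.mk s a = q} ℝ :=
          Matrix.of (fun i j => M i.1 j.1) with hWq
        have hres := IH {a // Quotient.mk s a = q} hcards Wq
          (fun i j => by simp only [hWq, Matrix.of_apply, hM, hsym i.1 j.1])
          (fun i => by
            simp only [hWq, Matrix.of_apply, hM, Matrix.of_apply]
            rw [if_pos (hrefl i.1), hdiag i.1]
            exact div_self hd.ne')
          (fun i j => by
            simp only [hWq, Matrix.of_apply, hM, Matrix.of_apply, if_pos (hrel i j)]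
            have := hcle i.1 j.1
            apply div_nonneg <;> linarith)
          (fun i j => by
            simp only [hWq, Matrix.of_apply, hM, Matrix.of_apply, if_pos (hrel i j)]
            rw [div_le_one hd]
            have := h1 i.1 j.1
            linarith)
          (fun i j k => by
            simp only [hWq, Matrix.of_apply, hM, Matrix.of_apply, if_pos (hrel i j),
              if_pos (hrel i k), if_pos (hrel k j)]
            have h' := hultra i.1 j.1 k.1
            rw [min_div_div_right hd.le, min_sub_sub_right]
            gcongr)
          (fun i => x i.1)
        rw [quad_expand] at hres
        exact hres
      have split : ∑ i, ∑ j, x i * W i j * x j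
          = c * ((∑ i, x i) * (∑ j, x j)) + (1-c) * (∑ i, ∑ j, x i * M i j * x j) := by
        have e1 : ∑ i, ∑ j, x i * W i j * x j
            = ∑ i, ∑ j, (c * (x i * x j) + (1-c) * (x i * M i j * x j)) :=
          Finset.sum_congr rfl fun i _ => Finset.sum_congr rfl fun j _ => by
            rw [hWM i j]; ring
        rw [e1]
        rw [Finset.sum_mul_sum]
        simp only [Finset.sum_add_distrib, Finset.mul_sum]
      rw [split]
      have := mul_self_nonneg (∑ i, x i)
      have h2 : 0 ≤ c * ((∑ i, x i) * (∑ j, x j)) := mul_nonneg hc0 (mul_self_nonneg _)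
      nlinarith [mul_nonneg hd.le hMpos]


/-- Positivity of the Loop Vertex Expansion tree matrix: for a finite tree `G`
with edge parameters `u ∈ [0,1]`, the matrix `W` with `W_{ii} = 1` and, for
`i ≠ j`, `W_{ij}` the minimum of `u` over the edges of the unique path from `i`
to `j`, is symmetric and positive semidefinite. -/
theorem tree_min_matrix_posSemidef {V : Type*} [Fintype V] [Nonempty V]
    (G : SimpleGraph V) (hG : G.IsTree)
    (u : Sym2 V → ℝ) (hu : ∀ e ∈ G.edgeSet, 0 ≤ u e ∧ u e ≤ 1)
    (W : Matrix V V ℝ)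
    (hdiag : ∀ i, W i i = 1)
    (hoff : ∀ i j, i ≠ j → ∀ p : G.Walk i j, p.IsPath →
      W i j = sInf (u '' {e : Sym2 V | e ∈ p.edges})) :
    W.IsSymm ∧ W.PosSemidef := by
  classical
  have huniq := hG.existsUnique_path
  have hpath : ∀ i j : V, ∃ p : G.Walk i j, p.IsPath := fun i j => (huniq i j).exists
  choose P hP using hpath
  have hene : ∀ {i j : V} (p : G.Walk i j), i ≠ j → ∃ e, e ∈ p.edges := by
    intro i j p hij
    cases p with
    | nil => exact absurd rfl hij
    | cons h q => exact ⟨_, List.mem_cons_self⟩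
  have hlb : ∀ {i j : V} (p : G.Walk i j), ∀ y ∈ u '' {e : Sym2 V | e ∈ p.edges}, 0 ≤ y := by
    rintro i j p y ⟨e, he, rfl⟩
    exact (hu e (p.edges_subset_edgeSet he)).1
  have hbdd : ∀ {i j : V} (p : G.Walk i j), BddBelow (u '' {e : Sym2 V | e ∈ p.edges}) :=
    fun p => ⟨0, hlb p⟩
  have hW : ∀ i j, i ≠ j → W i j = sInf (u '' {e : Sym2 V | e ∈ (P i j).edges}) :=
    fun i j h => hoff i j h (P i j) (hP i j)
  have h0 : ∀ i j, 0 ≤ W i j := by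
    intro i j
    by_cases h : i = j
    · subst h; rw [hdiag]; norm_num
    · rw [hW i j h]
      obtain ⟨e, he⟩ := hene (P i j) h
      exact le_csInf ⟨u e, ⟨e, he, rfl⟩⟩ (hlb (P i j))
  have h1 : ∀ i j, W i j ≤ 1 := by
    intro i j
    by_cases h : i = j
    · subst h; rw [hdiag]
    · rw [hW i j h]
      obtain ⟨e, he⟩ := hene (P i j) h
      exact le_trans (csInf_le (hbdd (P i j)) ⟨e, he, rfl⟩)
        (hu e ((P i j).edges_subset_edgeSet he)).2
  have hsym : ∀ i j, W i j = W j i := by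
    intro i j
    by_cases h : i = j
    · subst h; rfl
    · rw [hW i j h, hoff j i (Ne.symm h) (P i j).reverse (hP i j).reverse]
      congr 1
      ext y
      simp [SimpleGraph.Walk.edges_reverse]
  have hultra : ∀ i j k, min (W i k) (W k j) ≤ W i j := by
    intro i j k
    by_cases hij : i = j
    · subst hij
      rw [hdiag]
      exact le_trans (min_le_left _ _) (h1 i k)
    by_cases hik : i = k
    · subst hik
      rw [hdiag]
      exact min_le_right _ (W i j)
    by_cases hkj : k = j
    · subst hkj
      rw [hdiag]
      exact min_le_left (W i k) _
    -- all distinct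
    have hsub : ∀ e ∈ (P i j).edges, e ∈ (P i k).edges ∨ e ∈ (P k j).edges := by
      intro e he
      set w : G.Walk i j := (P i k).append (P k j) with hw
      have hbp : P i j = w.bypass := (huniq i j).unique (hP i j) w.bypass_isPath
      have : e ∈ w.edges := w.edges_bypass_subset (hbp ▸ he)
      rw [hw, SimpleGraph.Walk.edges_append, List.mem_append] at this
      exact this
    rw [hW i j hij, hW i k hik, hW k j hkj]
    have hunion : u '' {e : Sym2 V | e ∈ (P i j).edges} ⊆
        (u '' {e : Sym2 V | e ∈ (P i k).edges}) ∪ (u '' {e : Sym2 V | e ∈ (P k j).edges}) := by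
      rintro y ⟨e, he, rfl⟩
      rcases hsub e he with h' | h'
      · exact Or.inl ⟨e, h', rfl⟩
      · exact Or.inr ⟨e, h', rfl⟩
    obtain ⟨e1, he1⟩ := hene (P i k) hik
    obtain ⟨e2, he2⟩ := hene (P k j) hkj
    obtain ⟨e3, he3⟩ := hene (P i j) hij
    have hcu := csInf_union (hbdd (P i k)) ⟨u e1, e1, he1, rfl⟩ (hbdd (P k j)) ⟨u e2, e2, he2, rfl⟩
    calc min (sInf (u '' {e : Sym2 V | e ∈ (P i k).edges}))
          (sInf (u '' {e : Sym2 V | e ∈ (P k j).edges}))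
        = sInf ((u '' {e : Sym2 V | e ∈ (P i k).edges}) ∪
            (u '' {e : Sym2 V | e ∈ (P k j).edges})) := hcu.symm
      _ ≤ sInf (u '' {e : Sym2 V | e ∈ (P i j).edges}) :=
          csInf_le_csInf ((hbdd (P i k)).union (hbdd (P k j))) ⟨u e3, e3, he3, rfl⟩ hunion
  refine ⟨Matrix.ext fun i j => hsym j i, .of_dotProduct_mulVec_nonneg (Matrix.ext fun i j => ?_) fun x => ?_⟩
  · simp [Matrix.conjTranspose_apply, hsym j i]
  · have hx : star x = x := funext fun i => star_trivial _
    rw [hx]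
    exact ultra_form (Fintype.card V) V le_rfl W hsym hdiag h0 h1 hultra x
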